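/- Let 𝔭 and F be finite-dimensional real inner product spaces, let X₁,…,X_N be an orthonormal basis of 𝔭, and let ρ : 𝔭 → End(F) be a linear map such that ρ(X) is self-adjoint for every X ∈ 𝔭. For a linear map η : 𝔭 → F define Tη : 𝔭 → F by Tη(Y) = Σ_{k=1}^{N} [ ρ(X_k)(ρ(X_k)(η(Y))) + (ρ(Y)∘ρ(X_k) − ρ(X_k)∘ρ(Y))(η(X_k)) ]. Define the bilinear map β : 𝔭 × 𝔭 → F by β(X,Y) = ρ(X)(η(Y)), its skew-symmetric part α(X,Y) = ½(β(X,Y) − β(Y,X)), and Trace(β) = Σ_{k=1}^{N} β(X_k, X_k). Then Σ_{ℓ=1}^{N} ⟨Tη(X_ℓ), η(X_ℓ)⟩ = 2·Σ_{k,ℓ=1}^{N} ‖α(X_k, X_ℓ)‖² + ‖Trace(β)‖². -/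

import Mathlib

noncomputable section

open scoped RealInnerProductSpace

/-- **Matsushima–Murakami computation for 1-forms.** If `X₁,…,X_N` is an orthonormal basis
of `𝔭`, `ρ : 𝔭 → End F` is linear with self-adjoint values, `η : 𝔭 → F` is linear,
`β(X,Y) = ρ(X)(η(Y))`, `α` is the skew part of `β` and
`Tη(Y) = Σ_k ρ(X_k)²(η(Y)) + (ρ(Y)ρ(X_k) − ρ(X_k)ρ(Y))(η(X_k))`, then
`Σ_ℓ ⟪Tη(X_ℓ), η(X_ℓ)⟫ = 2 Σ_{k,ℓ} ‖α(X_k,X_ℓ)‖² + ‖Trace β‖²`. -/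
theorem matsushima_murakami_one_forms
    {𝔭 F : Type*} [NormedAddCommGroup 𝔭] [InnerProductSpace ℝ 𝔭]
    [NormedAddCommGroup F] [InnerProductSpace ℝ F]
    [FiniteDimensional ℝ 𝔭] [FiniteDimensional ℝ F]
    {N : ℕ} (b : OrthonormalBasis (Fin N) ℝ 𝔭)
    (ρ : 𝔭 →ₗ[ℝ] F →ₗ[ℝ] F)
    (hρ : ∀ X : 𝔭, (ρ X).IsSymmetric)
    (η : 𝔭 →ₗ[ℝ] F) :
    (∑ l : Fin N,
        ⟪∑ k : Fin N,
            (ρ (b k) (ρ (b k) (η (b l))) +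
              (ρ (b l) (ρ (b k) (η (b k))) - ρ (b k) (ρ (b l) (η (b k))))),
          η (b l)⟫)
      = 2 * (∑ k : Fin N, ∑ l : Fin N,
            ‖(1 / 2 : ℝ) • (ρ (b k) (η (b l)) - ρ (b l) (η (b k)))‖ ^ 2)
        + ‖∑ k : Fin N, ρ (b k) (η (b k))‖ ^ 2 := by
  set B : Fin N → Fin N → F := fun k l => ρ (b k) (η (b l)) with hB
  -- LHS in terms of B
  have hL : (∑ l : Fin N,
        ⟪∑ k : Fin N,
            (ρ (b k) (ρ (b k) (η (b l))) +
              (ρ (b l) (ρ (b k) (η (b k))) - ρ (b k) (ρ (b l) (η (b k))))),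
          η (b l)⟫)
      = ∑ l : Fin N, ∑ k : Fin N,
          (⟪B k l, B k l⟫ + (⟪B k k, B l l⟫ - ⟪B k l, B l k⟫)) := by
    refine Finset.sum_congr rfl fun l _ => ?_
    rw [sum_inner]
    refine Finset.sum_congr rfl fun k _ => ?_
    rw [inner_add_left, inner_sub_left]
    congr 1
    · exact hρ (b k) _ _
    congr 1
    · exact hρ (b l) _ _
    · rw [hρ (b k) _ _, real_inner_comm]
  -- the α term
  have hA : ∀ k l : Fin N, ‖(1 / 2 : ℝ) • (B k l - B l k)‖ ^ 2
      = (1/4) * (⟪B k l, B k l⟫ - 2 * ⟪B k l, B l k⟫ + ⟪B l k, B l k⟫) := by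
    intro k l
    rw [norm_smul, mul_pow, ← real_inner_self_eq_norm_sq (B k l - B l k),
      real_inner_sub_sub_self]
    norm_num
  -- the trace term
  have hT : ‖∑ k : Fin N, B k k‖ ^ 2
      = ∑ l : Fin N, ∑ k : Fin N, ⟪B k k, B l l⟫ := by
    rw [← real_inner_self_eq_norm_sq (∑ k : Fin N, B k k), sum_inner]
    simp only [inner_sum]
    exact Finset.sum_comm
  rw [hL, hT]
  simp only [show ∀ k l, ρ (b k) (η (b l)) = B k l from fun _ _ => rfl, hA]
  have eA : ∑ k : Fin N, ∑ l : Fin N,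
      ((1:ℝ)/4 * (⟪B k l, B k l⟫ - 2 * ⟪B k l, B l k⟫ + ⟪B l k, B l k⟫))
      = 1/4 * (∑ k : Fin N, ∑ l : Fin N, (⟪B k l, B k l⟫ : ℝ))
        - 1/2 * (∑ k : Fin N, ∑ l : Fin N, (⟪B k l, B l k⟫ : ℝ))
        + 1/4 * (∑ k : Fin N, ∑ l : Fin N, (⟪B l k, B l k⟫ : ℝ)) := by
    simp only [Finset.mul_sum]
    rw [← Finset.sum_sub_distrib, ← Finset.sum_add_distrib]
    refine Finset.sum_congr rfl fun k _ => ?_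
    rw [← Finset.sum_sub_distrib, ← Finset.sum_add_distrib]
    refine Finset.sum_congr rfl fun l _ => ?_
    ring
  rw [eA]
  have s1 : ∑ k : Fin N, ∑ l : Fin N, (⟪B l k, B l k⟫ : ℝ)
      = ∑ k : Fin N, ∑ l : Fin N, (⟪B k l, B k l⟫ : ℝ) := Finset.sum_comm
  have s2 : ∑ l : Fin N, ∑ k : Fin N, (⟪B k l, B k l⟫ : ℝ)
      = ∑ k : Fin N, ∑ l : Fin N, (⟪B k l, B k l⟫ : ℝ) := Finset.sum_comm
  have s3 : ∑ l : Fin N, ∑ k : Fin N, (⟪B k k, B l l⟫ : ℝ)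
      = ∑ k : Fin N, ∑ l : Fin N, (⟪B k k, B l l⟫ : ℝ) := Finset.sum_comm
  have s4 : ∑ l : Fin N, ∑ k : Fin N, (⟪B k l, B l k⟫ : ℝ)
      = ∑ k : Fin N, ∑ l : Fin N, (⟪B k l, B l k⟫ : ℝ) := Finset.sum_comm
  simp only [Finset.sum_add_distrib, Finset.sum_sub_distrib]
  linarith [s1, s2, s3, s4]
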